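/- The ordered weighted ℓ₁ functional J_λ(b) = Σᵢ λᵢ |b|_[i], with λ₁ ≥ ... ≥ λ_m ≥ 0 and |b|_[1] ≥ ... ≥ |b|_[m] the decreasing rearrangement of the absolute values of b, is a norm on ℝ^m whenever λ₁ > 0. -/
import Mathlib

/-- The `i`-th largest of `|b 1|, ..., |b m|` (decreasing rearrangement of `|b|`). -/
noncomputable def sortedAbsDesc {m : ℕ} (b : Fin m → ℝ) (i : Fin m) : ℝ :=
  |b (Tuple.sort (fun k => |b k|) i.rev)|

/-- The ordered weighted ℓ₁ functional `J lam b = ∑ i, lam i * |b|_[i]`. -/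
noncomputable def owl {m : ℕ} (lam : Fin m → ℝ) (b : Fin m → ℝ) : ℝ :=
  ∑ i, lam i * sortedAbsDesc b i

lemma sortedAbsDesc_anti {m : ℕ} (b : Fin m → ℝ) : Antitone (sortedAbsDesc b) := by
  intro i j hij
  exact Tuple.monotone_sort (fun k => |b k|) (Fin.rev_le_rev.mpr hij)

lemma sortedAbsDesc_nonneg {m : ℕ} (b : Fin m → ℝ) (i : Fin m) : 0 ≤ sortedAbsDesc b i :=
  abs_nonneg _

/-- `sortedAbsDesc b = |b| ∘ τ b` for the permutation `τ b`. -/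
noncomputable def tau {m : ℕ} (b : Fin m → ℝ) : Equiv.Perm (Fin m) :=
  (Fin.revPerm : Equiv.Perm (Fin m)).trans (Tuple.sort (fun k => |b k|))

lemma sortedAbsDesc_eq {m : ℕ} (b : Fin m → ℝ) (i : Fin m) :
    sortedAbsDesc b i = |b (tau b i)| := rfl

lemma abs_eq_sortedAbsDesc {m : ℕ} (b : Fin m → ℝ) (j : Fin m) :
    |b j| = sortedAbsDesc b ((tau b).symm j) := by
  rw [sortedAbsDesc_eq, Equiv.apply_symm_apply]

/-- Key rearrangement bound: any permuted pairing is at most `owl`. -/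
lemma sum_perm_le_owl {m : ℕ} (lam : Fin m → ℝ) (hanti : Antitone lam)
    (b : Fin m → ℝ) (σ : Equiv.Perm (Fin m)) :
    ∑ i, lam i * |b (σ i)| ≤ owl lam b := by
  have hmono : Monovary lam (sortedAbsDesc b) := by
    intro i j h
    have hji : j < i := by
      by_contra h'
      push_neg at h'
      exact absurd h (not_lt.mpr (sortedAbsDesc_anti b h'))
    exact hanti hji.le
  have key := hmono.sum_mul_comp_perm_le_sum_mul (σ := σ.trans (tau b).symm)
  calc ∑ i, lam i * |b (σ i)|
      = ∑ i, lam i * sortedAbsDesc b ((σ.trans (tau b).symm) i) := by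
        refine Finset.sum_congr rfl fun i _ => ?_
        rw [sortedAbsDesc_eq, Equiv.trans_apply, Equiv.apply_symm_apply]
    _ ≤ ∑ i, lam i * sortedAbsDesc b i := key
    _ = owl lam b := rfl

lemma owl_eq_sum_perm {m : ℕ} (lam : Fin m → ℝ) (b : Fin m → ℝ) :
    owl lam b = ∑ i, lam i * |b (tau b i)| :=
  Finset.sum_congr rfl fun i _ => by rw [sortedAbsDesc_eq]

/-- With `lam` nonincreasing, nonnegative and `lam 0 > 0`, the ordered weighted ℓ₁
functional is a norm: absolutely homogeneous, subadditive, and definite. -/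
theorem stmt6 {m : ℕ} (hm : 0 < m) (lam : Fin m → ℝ) (hanti : Antitone lam)
    (hnonneg : ∀ i, 0 ≤ lam i) (hpos : 0 < lam ⟨0, hm⟩) :
    (∀ (c : ℝ) (b : Fin m → ℝ), owl lam (fun i => c * b i) = |c| * owl lam b) ∧
    (∀ b₁ b₂ : Fin m → ℝ, owl lam (b₁ + b₂) ≤ owl lam b₁ + owl lam b₂) ∧
    (∀ b : Fin m → ℝ, owl lam b = 0 → b = 0) := by
  refine ⟨?_, ?_, ?_⟩
  · -- homogeneity
    intro c b
    apply le_antisymm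
    · rw [owl_eq_sum_perm lam (fun i => c * b i)]
      calc ∑ i, lam i * |c * b (tau (fun i => c * b i) i)|
          = |c| * ∑ i, lam i * |b (tau (fun i => c * b i) i)| := by
            rw [Finset.mul_sum]
            refine Finset.sum_congr rfl fun i _ => by rw [abs_mul]; ring
        _ ≤ |c| * owl lam b :=
            mul_le_mul_of_nonneg_left (sum_perm_le_owl lam hanti b _) (abs_nonneg c)
    · rw [owl_eq_sum_perm lam b]
      calc |c| * ∑ i, lam i * |b (tau b i)|
          = ∑ i, lam i * |c * b (tau b i)| := by
            rw [Finset.mul_sum]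
            refine Finset.sum_congr rfl fun i _ => by rw [abs_mul]; ring
        _ ≤ owl lam (fun i => c * b i) :=
            sum_perm_le_owl lam hanti (fun i => c * b i) (tau b)
  · -- triangle inequality
    intro b₁ b₂
    rw [owl_eq_sum_perm lam (b₁ + b₂)]
    set σ := tau (b₁ + b₂)
    calc ∑ i, lam i * |(b₁ + b₂) (σ i)|
        ≤ ∑ i, (lam i * |b₁ (σ i)| + lam i * |b₂ (σ i)|) := by
          refine Finset.sum_le_sum fun i _ => ?_
          rw [← mul_add]
          exact mul_le_mul_of_nonneg_left (abs_add_le _ _) (hnonneg i)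
      _ = (∑ i, lam i * |b₁ (σ i)|) + ∑ i, lam i * |b₂ (σ i)| := Finset.sum_add_distrib
      _ ≤ owl lam b₁ + owl lam b₂ :=
          add_le_add (sum_perm_le_owl lam hanti b₁ σ) (sum_perm_le_owl lam hanti b₂ σ)
  · -- definiteness
    intro b hb
    have hterm : ∀ i ∈ Finset.univ, lam i * sortedAbsDesc b i = 0 := by
      rw [← Finset.sum_eq_zero_iff_of_nonneg
        (fun i _ => mul_nonneg (hnonneg i) (sortedAbsDesc_nonneg b i))]
      exact hb
    have h0 : sortedAbsDesc b ⟨0, hm⟩ = 0 := by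
      have := hterm ⟨0, hm⟩ (Finset.mem_univ _)
      rcases mul_eq_zero.mp this with h | h
      · exact absurd h hpos.ne'
      · exact h
    funext j
    have h1 : |b j| ≤ sortedAbsDesc b ⟨0, hm⟩ := by
      rw [abs_eq_sortedAbsDesc b j]
      exact sortedAbsDesc_anti b (Fin.mk_le_of_le_val (Nat.zero_le _))
    rw [h0] at h1
    exact abs_nonpos_iff.mp h1
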